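/- Uniform-norm eviction-error bound: If ‖v_i‖ ≤ V for every i ∈ I and E ⊊ I, then ‖ô − o‖ ≤ 2·V·α_E. In particular, when the evicted set carries attention mass α_E ≤ ε, the approximation error is at most 2Vε. -/

import Mathlib

/-- **Uniform-norm eviction-error bound.**
If `‖v i‖ ≤ V` for every `i ∈ I` and `E ⊊ I`, then `‖ô - o‖ ≤ 2 · V · α_E`;
in particular if the evicted attention mass `α_E ≤ ε` then the error is at most `2·V·ε`. -/
theorem eviction_error_uniform_bound {ι H : Type*} [DecidableEq ι]
    [NormedAddCommGroup H] [NormedSpace ℝ H]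
    (I : Finset ι) (hI : I.Nonempty) (u : ι → ℝ) (v : ι → H) (V : ℝ)
    (hV : ∀ i ∈ I, ‖v i‖ ≤ V)
    (E : Finset ι) (hE : E ⊂ I) :
    ‖(∑ i ∈ I \ E, (Real.exp (u i) / (∑ j ∈ I \ E, Real.exp (u j))) • v i) -
        ∑ i ∈ I, (Real.exp (u i) / (∑ j ∈ I, Real.exp (u j))) • v i‖ ≤
      2 * V * ∑ i ∈ E, Real.exp (u i) / (∑ j ∈ I, Real.exp (u j)) ∧
    ∀ ε : ℝ, (∑ i ∈ E, Real.exp (u i) / (∑ j ∈ I, Real.exp (u j))) ≤ ε →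
      ‖(∑ i ∈ I \ E, (Real.exp (u i) / (∑ j ∈ I \ E, Real.exp (u j))) • v i) -
          ∑ i ∈ I, (Real.exp (u i) / (∑ j ∈ I, Real.exp (u j))) • v i‖ ≤
        2 * V * ε := by
  set Z : ℝ := ∑ j ∈ I, Real.exp (u j) with hZdef
  set Z' : ℝ := ∑ j ∈ I \ E, Real.exp (u j) with hZ'def
  have hEI : E ⊆ I := hE.subset
  have hne : (I \ E).Nonempty := by
    obtain ⟨x, hxI, hxE⟩ := Finset.exists_of_ssubset hE
    exact ⟨x, Finset.mem_sdiff.mpr ⟨hxI, hxE⟩⟩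
  have hZ' : 0 < Z' := Finset.sum_pos (fun i _ => Real.exp_pos _) hne
  have hZ : 0 < Z := Finset.sum_pos (fun i _ => Real.exp_pos _) hI
  have hsplit : Z' + ∑ i ∈ E, Real.exp (u i) = Z := Finset.sum_sdiff hEI
  have hZ'le : Z' ≤ Z := by
    have : 0 ≤ ∑ i ∈ E, Real.exp (u i) :=
      Finset.sum_nonneg fun i _ => (Real.exp_pos _).le
    linarith
  have hV0 : 0 ≤ V := by
    obtain ⟨x, hx⟩ := hI
    exact (norm_nonneg _).trans (hV x hx)
  have hαE : ∑ i ∈ E, Real.exp (u i) / Z = (Z - Z') / Z := by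
    rw [← Finset.sum_div]
    congr 1
    linarith
  have key : ‖(∑ i ∈ I \ E, (Real.exp (u i) / Z') • v i) -
      ∑ i ∈ I, (Real.exp (u i) / Z) • v i‖ ≤
      2 * V * ∑ i ∈ E, Real.exp (u i) / Z := by
    have hdec : (∑ i ∈ I \ E, (Real.exp (u i) / Z') • v i) -
        ∑ i ∈ I, (Real.exp (u i) / Z) • v i =
        (∑ i ∈ I \ E, (Real.exp (u i) / Z' - Real.exp (u i) / Z) • v i) -
        ∑ i ∈ E, (Real.exp (u i) / Z) • v i := by
      rw [← Finset.sum_sdiff (f := fun i => (Real.exp (u i) / Z) • v i) hEI]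
      simp only [sub_smul, Finset.sum_sub_distrib]
      abel
    rw [hdec]
    calc ‖(∑ i ∈ I \ E, (Real.exp (u i) / Z' - Real.exp (u i) / Z) • v i) -
        ∑ i ∈ E, (Real.exp (u i) / Z) • v i‖
        ≤ ‖∑ i ∈ I \ E, (Real.exp (u i) / Z' - Real.exp (u i) / Z) • v i‖ +
          ‖∑ i ∈ E, (Real.exp (u i) / Z) • v i‖ := norm_sub_le _ _
      _ ≤ (∑ i ∈ I \ E, (Real.exp (u i) / Z' - Real.exp (u i) / Z) * V) +
          ∑ i ∈ E, (Real.exp (u i) / Z) * V := by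
          gcongr
          · refine (norm_sum_le _ _).trans (Finset.sum_le_sum fun i hi => ?_)
            rw [norm_smul, Real.norm_eq_abs]
            have hge : Real.exp (u i) / Z ≤ Real.exp (u i) / Z' :=
              div_le_div_of_nonneg_left (Real.exp_pos _).le hZ' hZ'le
            rw [abs_of_nonneg (by linarith)]
            exact mul_le_mul_of_nonneg_left (hV i (Finset.mem_sdiff.mp hi).1)
              (by linarith)
          · refine (norm_sum_le _ _).trans (Finset.sum_le_sum fun i hi => ?_)
            rw [norm_smul, Real.norm_eq_abs,
              abs_of_nonneg (div_nonneg (Real.exp_pos _).le hZ.le)]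
            exact mul_le_mul_of_nonneg_left (hV i (hEI hi))
              (div_nonneg (Real.exp_pos _).le hZ.le)
      _ = 2 * V * ∑ i ∈ E, Real.exp (u i) / Z := by
          rw [← Finset.sum_mul, ← Finset.sum_mul, Finset.sum_sub_distrib,
            ← Finset.sum_div, ← Finset.sum_div, hαE, div_self hZ'.ne']
          have hs : ∑ i ∈ E, Real.exp (u i) = Z - Z' := by linarith
          field_simp
          rw [← hZ'def]; ring
  refine ⟨key, fun ε hε => key.trans ?_⟩
  have h2V : 0 ≤ 2 * V := by linarith
  exact mul_le_mul_of_nonneg_left hε h2V
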